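/- arXiv:1812.03713 — 3 statements merged into one kernel-verified Lean document; each statement's English description precedes it below -/
import Mathlib

section
/- Let D be an integral domain. The following are equivalent: (i) D is t-local (local with maximal ideal a t-ideal); (ii) D is w-local (local with maximal ideal a w-ideal); (iii) D is a local DW-domain (local and every nonzero fractional ideal of D is a w-ideal). -/
open scoped nonZeroDivisors

/-- The `t`-closure of a fractional ideal `E` of an integral domain `D`:
the union (here: supremum, which is a directed union) of `F^v = (F⁻¹)⁻¹` over all
nonzero finitely generated fractional subideals `F` of `E`, viewed as a
`D`-submodule of the fraction field of `D`. -/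
noncomputable def tClos (D : Type*) [CommRing D] [IsDomain D]
    (E : FractionalIdeal D⁰ (FractionRing D)) : Submodule D (FractionRing D) :=
  ⨆ F ∈ {F : FractionalIdeal D⁰ (FractionRing D) |
      F ≠ 0 ∧ F ≤ E ∧ (F : Submodule D (FractionRing D)).FG},
    (((F⁻¹)⁻¹ : FractionalIdeal D⁰ (FractionRing D)) : Submodule D (FractionRing D))

/-- An integral ideal `I` of an integral domain `D` is a `t`-ideal if `I = I^t`. -/
def Ideal.IsT {D : Type*} [CommRing D] [IsDomain D] (I : Ideal D) : Prop :=
  ((I : FractionalIdeal D⁰ (FractionRing D)) : Submodule D (FractionRing D)) = tClos D I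

/-- A Glaz–Vasconcelos ideal of `D`: a nonzero finitely generated integral ideal `J`
with `J⁻¹ = D`. -/
def IsGV {D : Type*} [CommRing D] [IsDomain D] (J : Ideal D) : Prop :=
  J ≠ ⊥ ∧ J.FG ∧ ((J : FractionalIdeal D⁰ (FractionRing D)))⁻¹ = 1

/-- The `w`-closure of a fractional ideal `E`:
`E^w = {x ∈ K : xJ ⊆ E for some GV-ideal J}`. -/
def wClos (D : Type*) [CommRing D] [IsDomain D]
    (E : FractionalIdeal D⁰ (FractionRing D)) : Set (FractionRing D) :=
  {x : FractionRing D | ∃ J : Ideal D, IsGV J ∧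
    ∀ j ∈ J, algebraMap D (FractionRing D) j * x ∈ E}

/-- A fractional ideal `E` is a `w`-ideal if `E = E^w`. -/
def IsW {D : Type*} [CommRing D] [IsDomain D]
    (E : FractionalIdeal D⁰ (FractionRing D)) : Prop :=
  ((E : Submodule D (FractionRing D)) : Set (FractionRing D)) = wClos D E

section Helpers

open FractionalIdeal

variable {D : Type*} [CommRing D] [IsDomain D]

local notation "K" => FractionRing D

private lemma inv_one' : (1 : FractionalIdeal D⁰ K)⁻¹ = 1 := by
  rw [inv_eq, FractionalIdeal.div_one]

private lemma inv_ne_zero'' {I : FractionalIdeal D⁰ K} (hI : I ≠ 0) : I⁻¹ ≠ 0 := by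
  obtain ⟨a, haS, ha⟩ := I.isFractional
  have ha0 : a ≠ 0 := nonZeroDivisors.ne_zero haS
  have hmem : algebraMap D K a ∈ I⁻¹ := by
    rw [mem_inv_iff hI]
    intro y hy
    obtain ⟨c, hc⟩ := ha y hy
    rw [mem_one_iff]
    exact ⟨c, by rw [hc, Algebra.smul_def]⟩
  intro h
  rw [h] at hmem
  simp only [FractionalIdeal.mem_zero_iff] at hmem
  exact ha0 (IsFractionRing.injective D K (by simpa using hmem))

private lemma le_inv_inv' {I : FractionalIdeal D⁰ K} (hI : I ≠ 0) : I ≤ I⁻¹⁻¹ := by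
  intro x hx
  have hx' : x ∈ I := hx
  show x ∈ I⁻¹⁻¹
  refine (mem_inv_iff (inv_ne_zero'' hI)).mpr fun y hy => ?_
  have hy' := (mem_inv_iff hI).mp hy x hx'
  simpa [mul_comm] using hy'

private lemma inv_inv_inv' {I : FractionalIdeal D⁰ K} (hI : I ≠ 0) : I⁻¹⁻¹⁻¹ = I⁻¹ :=
  le_antisymm (inv_anti_mono hI (inv_ne_zero'' (inv_ne_zero'' hI)) (le_inv_inv' hI))
    (le_inv_inv' (inv_ne_zero'' hI))

private lemma gv_top : IsGV (⊤ : Ideal D) := by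
  refine ⟨?_, ⟨{1}, by simp⟩, by rw [coeIdeal_top, inv_one']⟩
  intro h
  have : (1 : D) ∈ (⊥ : Ideal D) := h ▸ Submodule.mem_top
  exact one_ne_zero ((Submodule.mem_bot D).mp this)

private lemma one_mem_coeIdeal_iff {I : Ideal D} :
    (1 : K) ∈ (I : FractionalIdeal D⁰ K) ↔ (1 : D) ∈ I := by
  rw [mem_coeIdeal]
  constructor
  · rintro ⟨x, hx, hx1⟩
    have : x = 1 := IsFractionRing.injective D K (by simpa using hx1)
    rwa [this] at hx
  · intro h
    exact ⟨1, h, map_one _⟩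

variable [IsLocalRing D]

local notation "𝔪" => IsLocalRing.maximalIdeal D

private lemma noGV_of_isT (hT : (IsLocalRing.maximalIdeal D).IsT) :
    ∀ J : Ideal D, IsGV J → J = ⊤ := by
  intro J hJ
  by_contra ht
  have hJm : J ≤ 𝔪 := IsLocalRing.le_maximalIdeal ht
  set F : FractionalIdeal D⁰ K := (J : FractionalIdeal D⁰ K) with hF
  have hF0 : F ≠ 0 := coeIdeal_ne_zero.mpr hJ.1
  have hFle : F ≤ (𝔪 : FractionalIdeal D⁰ K) :=
    (coeIdeal_le_coeIdeal K).mpr hJm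
  have hFG : (F : Submodule D K).FG := by
    have : (F : Submodule D K) = Submodule.map (Algebra.linearMap D K) J := by
      rw [hF, coe_coeIdeal]; rfl
    rw [this]
    exact Submodule.FG.map (Algebra.linearMap D K) hJ.2.1
  have hle : ((F⁻¹⁻¹ : FractionalIdeal D⁰ K) : Submodule D K) ≤
      tClos D (𝔪 : FractionalIdeal D⁰ K) :=
    le_iSup₂_of_le F ⟨hF0, hFle, hFG⟩ le_rfl
  have h1 : (1 : K) ∈ tClos D (𝔪 : FractionalIdeal D⁰ K) := by
    apply hle
    have : F⁻¹⁻¹ = 1 := by rw [hJ.2.2, inv_one']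
    rw [this]
    exact one_mem_one _
  rw [← hT] at h1
  have : (1 : D) ∈ 𝔪 := one_mem_coeIdeal_iff.mp h1
  exact (IsLocalRing.maximalIdeal.isMaximal D).ne_top ((Ideal.eq_top_iff_one _).mpr this)

private lemma noGV_of_isW (hW : IsW ((𝔪 : Ideal D) : FractionalIdeal D⁰ K)) :
    ∀ J : Ideal D, IsGV J → J = ⊤ := by
  intro J hJ
  by_contra ht
  have hJm : J ≤ 𝔪 := IsLocalRing.le_maximalIdeal ht
  have h1 : (1 : K) ∈ wClos D ((𝔪 : Ideal D) : FractionalIdeal D⁰ K) := by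
    refine ⟨J, hJ, fun j hj => ?_⟩
    rw [mul_one]
    exact (mem_coeIdeal _).mpr ⟨j, hJm hj, rfl⟩
  rw [← hW] at h1
  have : (1 : D) ∈ 𝔪 := one_mem_coeIdeal_iff.mp h1
  exact (IsLocalRing.maximalIdeal.isMaximal D).ne_top ((Ideal.eq_top_iff_one _).mpr this)

private lemma isW_of_noGV (hA : ∀ J : Ideal D, IsGV J → J = ⊤)
    (E : FractionalIdeal D⁰ K) : IsW E := by
  ext x
  constructor
  · intro hx
    have hx' : x ∈ E := hx
    refine ⟨⊤, gv_top, fun j _ => ?_⟩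
    rw [← Algebra.smul_def]
    exact Submodule.smul_mem (E : Submodule D K) j hx'
  · rintro ⟨J, hJ, h⟩
    have := hA J hJ
    subst this
    have h1 := h 1 Submodule.mem_top
    rw [_root_.map_one, one_mul] at h1
    exact h1

private lemma noGV_of_dw (h : ∀ E : FractionalIdeal D⁰ K, E ≠ 0 → IsW E) :
    ∀ J : Ideal D, IsGV J → J = ⊤ := by
  intro J hJ
  by_contra ht
  have hJm : J ≤ 𝔪 := IsLocalRing.le_maximalIdeal ht
  have hm : (𝔪 : Ideal D) ≠ ⊥ := fun e => hJ.1 (le_bot_iff.mp (e ▸ hJm))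
  exact ht (noGV_of_isW (h _ (coeIdeal_ne_zero.mpr hm)) J hJ)

private lemma isT_of_noGV (hA : ∀ J : Ideal D, IsGV J → J = ⊤) :
    (IsLocalRing.maximalIdeal D).IsT := by
  apply le_antisymm
  · intro x hx
    rcases eq_or_ne x 0 with rfl | hx0
    · exact Submodule.zero_mem _
    set F : FractionalIdeal D⁰ K := spanSingleton D⁰ x with hF
    have hF0 : F ≠ 0 := spanSingleton_ne_zero_iff.mpr hx0
    have hFle : F ≤ ((𝔪 : Ideal D) : FractionalIdeal D⁰ K) :=
      spanSingleton_le_iff_mem.mpr hx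
    have hFG : (F : Submodule D K).FG := by
      rw [hF, coe_spanSingleton]
      exact Submodule.fg_span_singleton x
    have hle : ((F⁻¹⁻¹ : FractionalIdeal D⁰ K) : Submodule D K) ≤
        tClos D ((𝔪 : Ideal D) : FractionalIdeal D⁰ K) :=
      le_iSup₂_of_le F ⟨hF0, hFle, hFG⟩ le_rfl
    exact hle (le_inv_inv' hF0 (mem_spanSingleton_self D⁰ x))
  · refine iSup₂_le fun F hF => ?_
    obtain ⟨hF0, hFle, hFG⟩ := hF
    rw [FractionalIdeal.coe_le_coe]
    have hFone : F ≤ 1 := le_trans hFle coeIdeal_le_one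
    have hone : (1 : FractionalIdeal D⁰ K) ≠ 0 := by
      rw [← coeIdeal_top]
      exact coeIdeal_ne_zero.mpr gv_top.1
    have hinvge : (1 : FractionalIdeal D⁰ K) ≤ F⁻¹ := by
      have := inv_anti_mono hF0 hone hFone
      rwa [inv_one'] at this
    have hvle : F⁻¹⁻¹ ≤ 1 := by
      have := inv_anti_mono hone (inv_ne_zero'' hF0) hinvge
      rwa [inv_one'] at this
    obtain ⟨I, hI⟩ := le_one_iff_exists_coeIdeal.mp hvle
    by_cases hIm : I ≤ 𝔪
    · rw [← hI]
      exact (coeIdeal_le_coeIdeal K).mpr hIm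
    · exfalso
      have hItop : I = ⊤ := by
        by_contra hne
        exact hIm (IsLocalRing.le_maximalIdeal hne)
      have hFv1 : F⁻¹⁻¹ = 1 := by rw [← hI, hItop, coeIdeal_top]
      have hFinv1 : F⁻¹ = 1 := by
        rw [← inv_inv_inv' hF0, hFv1, inv_one']
      obtain ⟨J₀, hJ₀⟩ := le_one_iff_exists_coeIdeal.mp hFone
      have hJ0ne : J₀ ≠ ⊥ := coeIdeal_ne_zero.mp (hJ₀ ▸ hF0)
      have hJ0fg : J₀.FG := by
        apply Submodule.fg_of_fg_map_injective (Algebra.linearMap D K)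
          (IsFractionRing.injective D K)
        have : (F : Submodule D K) = Submodule.map (Algebra.linearMap D K) J₀ := by
          rw [← hJ₀, coe_coeIdeal]
          rfl
        rwa [this] at hFG
      have hgv : IsGV J₀ := ⟨hJ0ne, hJ0fg, by rw [hJ₀, hFinv1]⟩
      have hJ0top := hA J₀ hgv
      have hle1 : (1 : FractionalIdeal D⁰ K) ≤ ((𝔪 : Ideal D) : FractionalIdeal D⁰ K) := by
        rw [← coeIdeal_top, ← hJ0top, hJ₀]
        exact hFle
      have : (1 : D) ∈ 𝔪 := one_mem_coeIdeal_iff.mp (hle1 (one_mem_one _))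
      exact (IsLocalRing.maximalIdeal.isMaximal D).ne_top ((Ideal.eq_top_iff_one _).mpr this)

end Helpers

/-- For a local integral domain `D` the following are equivalent:
(i) `D` is `t`-local (its maximal ideal is a `t`-ideal);
(ii) `D` is `w`-local (its maximal ideal is a `w`-ideal);
(iii) `D` is a DW-domain (every nonzero fractional ideal of `D` is a `w`-ideal). -/
theorem t_local_iff_w_local_iff_local_dw (D : Type*) [CommRing D] [IsDomain D]
    [IsLocalRing D] :
    List.TFAE
      [ (IsLocalRing.maximalIdeal D).IsT,
        IsW ((IsLocalRing.maximalIdeal D : Ideal D) :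
          FractionalIdeal D⁰ (FractionRing D)),
        ∀ E : FractionalIdeal D⁰ (FractionRing D), E ≠ 0 → IsW E ] := by
  tfae_have 1 → 3 := fun h E _ => isW_of_noGV (noGV_of_isT h) E
  tfae_have 3 → 2 := fun h => isW_of_noGV (noGV_of_dw h) _
  tfae_have 2 → 1 := fun h => isT_of_noGV (noGV_of_isW h)
  tfae_finish
end

section
/- Let D be an integral domain. The following are equivalent: (i) every overring of D (ring between D and its quotient field) is t-linked over D; (ii) every valuation overring of D is t-linked over D; (iii) every maximal ideal of D is a t-ideal; (iv) for every nonzero proper ideal I of D, I^t ≠ D; (v) for every nonzero proper finitely generated ideal J of D, J^t ≠ D; (vi) every t-invertible ideal of D is invertible. -/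
open scoped nonZeroDivisors

/-- `I^t = A` for an integral ideal `I` of a domain `A`. -/
noncomputable def TClosEqTop (A : Type*) [CommRing A] [IsDomain A] (I : Ideal A) : Prop :=
  tClos A (I : FractionalIdeal A⁰ (FractionRing A)) =
    ((1 : FractionalIdeal A⁰ (FractionRing A)) : Submodule A (FractionRing A))

/-- An overring `T` of `D` (a subalgebra of the quotient field of `D`) is `t`-linked
over `D` if for every nonzero finitely generated ideal `J` of `D` with `J^t = D` one
has `(JT)^t = T`, the latter `t`-operation being computed in `T`. -/
def TLinked {D : Type*} [CommRing D] [IsDomain D]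
    (T : Subalgebra D (FractionRing D)) : Prop :=
  ∀ J : Ideal D, J ≠ ⊥ → J.FG → TClosEqTop D J →
    TClosEqTop T (J.map (algebraMap D T))

section Helpers

open FractionalIdeal

variable {A : Type*} [CommRing A] [IsDomain A]

lemma inv_ne_zero''_s8 {J : FractionalIdeal A⁰ (FractionRing A)} (hJ : J ≠ 0) : J⁻¹ ≠ 0 := by
  obtain ⟨a, ha, haJ⟩ := J.isFractional
  have hmem : (algebraMap A (FractionRing A) a) ∈ J⁻¹ := by
    rw [FractionalIdeal.mem_inv_iff hJ]
    intro y hy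
    obtain ⟨r, hr⟩ := haJ y hy
    exact (FractionalIdeal.mem_one_iff _).mpr ⟨r, by rw [hr, Algebra.smul_def]⟩
  intro h0
  rw [h0, FractionalIdeal.mem_zero_iff] at hmem
  exact nonZeroDivisors.ne_zero ha (IsFractionRing.to_map_eq_zero_iff.mp hmem)

lemma v_mono {E F : FractionalIdeal A⁰ (FractionRing A)} (hF : F ≠ 0) (h : F ≤ E) :
    F⁻¹⁻¹ ≤ E⁻¹⁻¹ := by
  have hE : E ≠ 0 := fun h0 => hF (FractionalIdeal.le_zero_iff.mp (h0 ▸ h))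
  exact FractionalIdeal.inv_anti_mono (inv_ne_zero''_s8 hE) (inv_ne_zero''_s8 hF)
    (FractionalIdeal.inv_anti_mono hF hE h)

lemma le_tClos {E F : FractionalIdeal A⁰ (FractionRing A)} (hF : F ≠ 0) (hFE : F ≤ E)
    (hfg : (F : Submodule A (FractionRing A)).FG) :
    ((F⁻¹⁻¹ : FractionalIdeal A⁰ (FractionRing A)) : Submodule A (FractionRing A)) ≤
      tClos A E := by
  unfold tClos
  exact le_iSup₂_of_le F ⟨hF, hFE, hfg⟩ le_rfl

lemma tClos_mono {E E' : FractionalIdeal A⁰ (FractionRing A)} (h : E ≤ E') :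
    tClos A E ≤ tClos A E' := by
  unfold tClos
  exact iSup₂_le fun _ hF => le_tClos hF.1 (hF.2.1.trans h) hF.2.2

lemma tClos_le_v {E : FractionalIdeal A⁰ (FractionRing A)} :
    tClos A E ≤ ((E⁻¹⁻¹ : FractionalIdeal A⁰ (FractionRing A)) :
      Submodule A (FractionRing A)) := by
  unfold tClos
  exact iSup₂_le fun _ hF => FractionalIdeal.coe_le_coe.mpr (v_mono hF.1 hF.2.1)

lemma tClos_eq_v {E : FractionalIdeal A⁰ (FractionRing A)} (hE : E ≠ 0)
    (hfg : (E : Submodule A (FractionRing A)).FG) :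
    tClos A E = ((E⁻¹⁻¹ : FractionalIdeal A⁰ (FractionRing A)) :
      Submodule A (FractionRing A)) :=
  le_antisymm tClos_le_v (le_tClos hE le_rfl hfg)

lemma one_fg' : ((1 : FractionalIdeal A⁰ (FractionRing A)) :
    Submodule A (FractionRing A)).FG := by
  rw [FractionalIdeal.coe_one]
  exact ⟨{1}, by rw [Finset.coe_singleton, ← Submodule.one_eq_span]⟩

lemma inv_one'' : (1 : FractionalIdeal A⁰ (FractionRing A))⁻¹ = 1 := by
  rw [FractionalIdeal.inv_eq, FractionalIdeal.div_one]

lemma frac_one_ne_zero : (1 : FractionalIdeal A⁰ (FractionRing A)) ≠ 0 := by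
  rw [← FractionalIdeal.coeIdeal_top]
  exact FractionalIdeal.coeIdeal_ne_zero.mpr top_ne_bot

lemma tClos_one : tClos A (1 : FractionalIdeal A⁰ (FractionRing A)) =
    ((1 : FractionalIdeal A⁰ (FractionRing A)) : Submodule A (FractionRing A)) := by
  rw [tClos_eq_v frac_one_ne_zero one_fg', inv_one'', inv_one'']

lemma tClos_zero : tClos A (0 : FractionalIdeal A⁰ (FractionRing A)) = ⊥ := by
  unfold tClos
  exact le_bot_iff.mp (iSup₂_le fun _ hF => absurd (FractionalIdeal.le_zero_iff.mp hF.2.1) hF.1)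

lemma exists_of_mem_tClos {E : FractionalIdeal A⁰ (FractionRing A)} (hE : E ≠ 0)
    {x : FractionRing A} (hx : x ∈ tClos A E) :
    ∃ F : FractionalIdeal A⁰ (FractionRing A), F ≠ 0 ∧ F ≤ E ∧
      (F : Submodule A (FractionRing A)).FG ∧
      x ∈ (F⁻¹⁻¹ : FractionalIdeal A⁰ (FractionRing A)) := by
  set s := {F : FractionalIdeal A⁰ (FractionRing A) |
      F ≠ 0 ∧ F ≤ E ∧ (F : Submodule A (FractionRing A)).FG} with hs
  have hne : s.Nonempty := by
    obtain ⟨y, hyE, hy0⟩ := Submodule.exists_mem_ne_zero_of_ne_bot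
      (FractionalIdeal.coeToSubmodule_ne_bot.mpr hE)
    refine ⟨FractionalIdeal.spanSingleton A⁰ y,
      FractionalIdeal.spanSingleton_ne_zero_iff.mpr hy0,
      FractionalIdeal.spanSingleton_le_iff_mem.mpr hyE, ?_⟩
    rw [FractionalIdeal.coe_spanSingleton]
    exact Submodule.fg_span_singleton y
  haveI : Nonempty s := hne.to_subtype
  have hdir : Directed (· ≤ ·) (fun F : s =>
      ((F.1⁻¹⁻¹ : FractionalIdeal A⁰ (FractionRing A)) : Submodule A (FractionRing A))) := by
    rintro ⟨F₁, h1, h1e, h1f⟩ ⟨F₂, h2, h2e, h2f⟩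
    have hmem : F₁ ⊔ F₂ ∈ s := by
      refine ⟨fun h0 => h1 (FractionalIdeal.le_zero_iff.mp (le_sup_left.trans h0.le)), sup_le h1e h2e, ?_⟩
      rw [FractionalIdeal.coe_sup]
      exact Submodule.FG.sup h1f h2f
    exact ⟨⟨F₁ ⊔ F₂, hmem⟩,
      FractionalIdeal.coe_le_coe.mpr (v_mono h1 le_sup_left),
      FractionalIdeal.coe_le_coe.mpr (v_mono h2 le_sup_right)⟩
  have heq : tClos A E = ⨆ F : s,
      ((F.1⁻¹⁻¹ : FractionalIdeal A⁰ (FractionRing A)) : Submodule A (FractionRing A)) := by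
    rw [tClos, ← hs]
    exact iSup_subtype'
  rw [heq] at hx
  obtain ⟨⟨F, hF⟩, hxF⟩ := (Submodule.mem_iSup_of_directed _ hdir).mp hx
  exact ⟨F, hF.1, hF.2.1, hF.2.2, hxF⟩

end Helpers

section Main

open FractionalIdeal

set_option maxHeartbeats 2000000 in
set_option synthInstance.maxHeartbeats 400000 in
/-- For an integral domain `D` the following are equivalent:
(i) every overring of `D` is `t`-linked over `D`;
(ii) every valuation overring of `D` is `t`-linked over `D`;
(iii) every maximal ideal of `D` is a `t`-ideal;
(iv) `I^t ≠ D` for every nonzero proper ideal `I` of `D`;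
(v) `J^t ≠ D` for every nonzero proper finitely generated ideal `J` of `D`;
(vi) every `t`-invertible ideal of `D` is invertible. -/
theorem t_linkative_tfae (D : Type*) [CommRing D] [IsDomain D] :
    List.TFAE
      [ ∀ T : Subalgebra D (FractionRing D), TLinked T,
        ∀ T : Subalgebra D (FractionRing D), ValuationRing T → TLinked T,
        ∀ M : Ideal D, M.IsMaximal → M.IsT,
        ∀ I : Ideal D, I ≠ ⊥ → I ≠ ⊤ → ¬ TClosEqTop D I,
        ∀ J : Ideal D, J ≠ ⊥ → J ≠ ⊤ → J.FG → ¬ TClosEqTop D J,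
        ∀ I : Ideal D,
          tClos D ((I : FractionalIdeal D⁰ (FractionRing D)) *
              (I : FractionalIdeal D⁰ (FractionRing D))⁻¹) =
            ((1 : FractionalIdeal D⁰ (FractionRing D)) : Submodule D (FractionRing D)) →
          (I : FractionalIdeal D⁰ (FractionRing D)) *
            (I : FractionalIdeal D⁰ (FractionRing D))⁻¹ = 1 ] := by
  tfae_have 1 → 2
  | h1, T, _ => h1 T
  tfae_have 4 → 5
  | h4, J, h0, htop, _, hT => h4 J h0 htop hT
  tfae_have 5 → 4
  | h5, I, hI0, hItop, hT => by
    have h1 : (1 : FractionRing D) ∈ tClos D I := by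
      rw [hT, FractionalIdeal.coe_one]
      exact Submodule.one_le.mp le_rfl
    have hI : (I : FractionalIdeal D⁰ (FractionRing D)) ≠ 0 :=
      FractionalIdeal.coeIdeal_ne_zero.mpr hI0
    obtain ⟨F, hF0, hFI, hFfg, hF1⟩ := exists_of_mem_tClos hI h1
    obtain ⟨J, rfl⟩ := FractionalIdeal.le_one_iff_exists_coeIdeal.mp
      (hFI.trans FractionalIdeal.coeIdeal_le_one)
    refine h5 J (FractionalIdeal.coeIdeal_ne_zero.mp hF0) ?_ ?_ ?_
    · rintro rfl
      rw [FractionalIdeal.coeIdeal_top] at hFI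
      exact hItop (top_le_iff.mp ((FractionalIdeal.coeIdeal_le_coeIdeal (FractionRing D)).mp
        (by rwa [FractionalIdeal.coeIdeal_top])))
    · exact (FractionalIdeal.coeIdeal_fg D⁰ (IsFractionRing.injective D (FractionRing D)) J).mp hFfg
    · have hv := tClos_eq_v hF0 hFfg
      have hle : ((J : FractionalIdeal D⁰ (FractionRing D)))⁻¹⁻¹ ≤ 1 := by
        have h2 := v_mono hF0 (FractionalIdeal.coeIdeal_le_one
          (I := J) (S := D⁰) (P := FractionRing D))
        rwa [inv_one'', inv_one''] at h2
      have hge : (1 : FractionalIdeal D⁰ (FractionRing D)) ≤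
          (J : FractionalIdeal D⁰ (FractionRing D))⁻¹⁻¹ :=
        FractionalIdeal.one_le.mpr hF1
      show tClos D _ = _
      rw [hv, le_antisymm hle hge]
  tfae_have 4 → 3
  | h4, M, hM => by
    by_cases hMbot : M = ⊥
    · subst hMbot
      show ((_ : FractionalIdeal D⁰ (FractionRing D)) : Submodule D (FractionRing D)) = _
      rw [FractionalIdeal.coeIdeal_bot, tClos_zero, FractionalIdeal.coe_zero]
    · have hsub : (((M : FractionalIdeal D⁰ (FractionRing D)) :
          Submodule D (FractionRing D))) ≤ tClos D M := by
        intro x hx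
        rw [FractionalIdeal.mem_coe] at hx
        obtain ⟨m, hm, rfl⟩ := (FractionalIdeal.mem_coeIdeal _).mp hx
        by_cases hm0 : m = 0
        · subst hm0; rw [_root_.map_zero]; exact Submodule.zero_mem _
        · have hx0 : algebraMap D (FractionRing D) m ≠ 0 :=
            fun h => hm0 (IsFractionRing.to_map_eq_zero_iff.mp h)
          have hle := le_tClos (E := (M : FractionalIdeal D⁰ (FractionRing D)))
            (F := spanSingleton D⁰ (algebraMap D (FractionRing D) m))
            (FractionalIdeal.spanSingleton_ne_zero_iff.mpr hx0)
            (FractionalIdeal.spanSingleton_le_iff_mem.mpr hx)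
            (by rw [FractionalIdeal.coe_spanSingleton]; exact Submodule.fg_span_singleton _)
          apply hle
          rw [FractionalIdeal.spanSingleton_inv, FractionalIdeal.spanSingleton_inv, inv_inv,
            FractionalIdeal.coe_spanSingleton]
          exact Submodule.mem_span_singleton_self _
      have hrange : tClos D M ≤ LinearMap.range (Algebra.linearMap D (FractionRing D)) := by
        have h2 := tClos_mono (E := (M : FractionalIdeal D⁰ (FractionRing D)))
          (E' := 1) FractionalIdeal.coeIdeal_le_one
        rw [tClos_one, FractionalIdeal.coe_one, Submodule.one_eq_range] at h2
        exact h2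
      set N := Submodule.comap (Algebra.linearMap D (FractionRing D)) (tClos D M) with hN
      have hmapN : Submodule.map (Algebra.linearMap D (FractionRing D)) N = tClos D M :=
        Submodule.map_comap_eq_self hrange
      have hMN : M ≤ N := by
        intro x hx
        exact hsub (FractionalIdeal.mem_coe.mpr ((FractionalIdeal.mem_coeIdeal _).mpr
          ⟨x, hx, rfl⟩))
      by_cases hNtop : N = ⊤
      · exfalso
        apply h4 M hMbot hM.ne_top
        show tClos D _ = _
        rw [← hmapN, hNtop, Submodule.map_top, FractionalIdeal.coe_one, Submodule.one_eq_range]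
      · have : M = N := hM.eq_of_le hNtop hMN
        show ((_ : FractionalIdeal D⁰ (FractionRing D)) : Submodule D (FractionRing D)) = _
        rw [← hmapN, ← this, FractionalIdeal.coe_coeIdeal]
        rfl
  tfae_have 3 → 4
  | h3, I, hI0, hItop, hT => by
    obtain ⟨M, hM, hIM⟩ := Ideal.exists_le_maximal I hItop
    have h1 : tClos D I ≤ tClos D M :=
      tClos_mono ((FractionalIdeal.coeIdeal_le_coeIdeal _).mpr hIM)
    rw [hT, ← h3 M hM] at h1
    have h2 : (⊤ : Ideal D) ≤ M := by
      rw [← FractionalIdeal.coeIdeal_le_coeIdeal (FractionRing D), FractionalIdeal.coeIdeal_top]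
      exact FractionalIdeal.coe_le_coe.mp h1
    exact hM.ne_top (top_le_iff.mp h2)
  tfae_have 4 → 6
  | h4, I, hT => by
    by_cases hI0 : I = ⊥
    · exfalso
      subst hI0
      rw [FractionalIdeal.coeIdeal_bot, FractionalIdeal.inv_zero', mul_zero, tClos_zero] at hT
      have : (1 : FractionRing D) ∈ ((1 : FractionalIdeal D⁰ (FractionRing D)) :
          Submodule D (FractionRing D)) := by
        rw [FractionalIdeal.coe_one]; exact Submodule.one_le.mp le_rfl
      rw [← hT] at this
      exact one_ne_zero ((Submodule.mem_bot D).mp this)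
    · have hE1 : (I : FractionalIdeal D⁰ (FractionRing D)) *
          (I : FractionalIdeal D⁰ (FractionRing D))⁻¹ ≤ 1 := by
        rw [FractionalIdeal.inv_eq]
        exact FractionalIdeal.mul_one_div_le_one
      obtain ⟨J₀, hJ₀⟩ := FractionalIdeal.le_one_iff_exists_coeIdeal.mp hE1
      by_cases hJtop : J₀ = ⊤
      · rw [← hJ₀, hJtop, FractionalIdeal.coeIdeal_top]
      · exfalso
        refine h4 J₀ ?_ hJtop ?_
        · intro hbot
          rw [hbot, FractionalIdeal.coeIdeal_bot] at hJ₀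
          have hle := FractionalIdeal.coe_ideal_le_self_mul_inv (FractionRing D) I
          rw [← hJ₀] at hle
          exact FractionalIdeal.coeIdeal_ne_zero.mpr hI0 (FractionalIdeal.le_zero_iff.mp hle)
        · show tClos D _ = _
          rw [hJ₀]
          exact hT
  tfae_have 6 → 5
  | h6, J, hJ0, hJtop, hfg, hT => by
    have hJf : (J : FractionalIdeal D⁰ (FractionRing D)) ≠ 0 :=
      FractionalIdeal.coeIdeal_ne_zero.mpr hJ0
    have hfg' : ((J : FractionalIdeal D⁰ (FractionRing D)) :
        Submodule D (FractionRing D)).FG :=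
      (FractionalIdeal.coeIdeal_fg D⁰ (IsFractionRing.injective D (FractionRing D)) J).mpr hfg
    have hT' : tClos D (J : FractionalIdeal D⁰ (FractionRing D)) = _ := hT
    rw [tClos_eq_v hJf hfg'] at hT'
    have hveq : (J : FractionalIdeal D⁰ (FractionRing D))⁻¹⁻¹ = 1 :=
      FractionalIdeal.coeToSubmodule_injective hT'
    have hmulle : (J : FractionalIdeal D⁰ (FractionRing D)) *
        (J : FractionalIdeal D⁰ (FractionRing D))⁻¹ ≤ 1 := by
      rw [FractionalIdeal.inv_eq]; exact FractionalIdeal.mul_one_div_le_one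
    have hprod : tClos D ((J : FractionalIdeal D⁰ (FractionRing D)) *
        (J : FractionalIdeal D⁰ (FractionRing D))⁻¹) =
        ((1 : FractionalIdeal D⁰ (FractionRing D)) : Submodule D (FractionRing D)) := by
      refine le_antisymm ?_ ?_
      · have := tClos_mono (A := D) hmulle
        rwa [tClos_one] at this
      · have := tClos_mono (A := D)
          (FractionalIdeal.coe_ideal_le_self_mul_inv (FractionRing D) J)
        rw [hT] at this
        exact this
    have hinv := h6 J hprod
    have hJeq : (J : FractionalIdeal D⁰ (FractionRing D)) =
        (J : FractionalIdeal D⁰ (FractionRing D))⁻¹⁻¹ :=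
      FractionalIdeal.right_inverse_eq (FractionRing D) _ _ (by rw [mul_comm]; exact hinv)
    rw [hveq] at hJeq
    exact hJtop (by rw [← Ideal.one_eq_top]; exact FractionalIdeal.coeIdeal_eq_one.mp hJeq)
  tfae_have 5 → 1
  | h5 => by
    intro T J hJ0 hfg hT
    by_cases hJtop : J = ⊤
    · subst hJtop
      show tClos _ _ = _
      rw [Ideal.map_top, FractionalIdeal.coeIdeal_top]
      exact tClos_one
    · exact absurd hT (h5 J hJ0 hJtop hfg)
  tfae_have 2 → 5
  | h2, J, hJ0, hJtop, hfg, hT => by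
    classical
    obtain ⟨M, hM, hJM⟩ := Ideal.exists_le_maximal J hJtop
    haveI := hM.isPrime
    set R := Localization.AtPrime M with hR
    have hunits : ∀ y : M.primeCompl, IsUnit (algebraMap D (FractionRing D) y) := by
      intro y
      exact IsLocalization.map_units (M := D⁰) (FractionRing D)
        ⟨y.1, mem_nonZeroDivisors_of_ne_zero (fun h => y.2 (h ▸ M.zero_mem))⟩
    set f : R →+* FractionRing D := IsLocalization.lift hunits with hf
    obtain ⟨V, hV, hlocal⟩ := IsLocalRing.exists_factor_valuationRing f
    set T : Subalgebra D (FractionRing D) :=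
      { V.toSubring.toSubsemiring with
        algebraMap_mem' := fun d => by
          have h := hV (algebraMap D R d)
          rwa [IsLocalization.lift_eq] at h } with hTdef
    have hmemT : ∀ x : FractionRing D, x ∈ T ↔ x ∈ V := fun x => Iff.rfl
    haveI hpre : PreValuationRing T := by
      refine ⟨fun a b => ?_⟩
      rcases eq_or_ne (b : FractionRing D) 0 with hb0 | hb0
      · exact ⟨0, Or.inl (Subtype.ext (by simp [hb0]))⟩
      rcases eq_or_ne (a : FractionRing D) 0 with ha0 | ha0
      · exact ⟨0, Or.inr (Subtype.ext (by simp [ha0]))⟩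
      rcases V.mem_or_inv_mem ((a : FractionRing D) / b) with h | h
      · exact ⟨⟨_, (hmemT _).mpr h⟩, Or.inr (Subtype.ext (by
          show (b : FractionRing D) * (a / b) = a
          field_simp))⟩
      · rw [inv_div] at h
        exact ⟨⟨_, (hmemT _).mpr h⟩, Or.inl (Subtype.ext (by
          show (a : FractionRing D) * (b / a) = b
          field_simp))⟩
    haveI hVR : ValuationRing T := { toPreValuationRing := hpre }
    have hTL := h2 T hVR J hJ0 hfg hT
    set J' : Ideal T := J.map (algebraMap D T) with hJ'
    have halg : ∀ x : D, ((algebraMap D T x : T) : FractionRing D) =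
        algebraMap D (FractionRing D) x := fun x => rfl
    have hnon : ∀ x ∈ J, ¬ IsUnit (algebraMap D T x) := by
      intro x hx hu
      have hxV : f (algebraMap D R x) = algebraMap D (FractionRing D) x :=
        IsLocalization.lift_eq _ _
      have hunit : IsUnit ((f.codRestrict V.toSubring hV) (algebraMap D R x)) := by
        obtain ⟨c, hc⟩ := isUnit_iff_exists_inv.mp hu
        refine isUnit_iff_exists_inv.mpr ⟨⟨(c : FractionRing D), c.2⟩, Subtype.ext ?_⟩
        have hc' := congrArg (fun z : T => (z : FractionRing D)) hc
        show f (algebraMap D R x) * (c : FractionRing D) = 1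
        rw [hxV]
        exact hc'
      have := hlocal.map_nonunit _ hunit
      rw [IsLocalization.AtPrime.isUnit_to_map_iff R M x] at this
      exact this (hJM hx)
    haveI : IsLocalRing T := ValuationRing.isLocalRing T
    have hJ'le : J' ≤ IsLocalRing.maximalIdeal T := by
      rw [Ideal.map_le_iff_le_comap]
      intro x hx
      exact hnon x hx
    have hJ'top : J' ≠ ⊤ := fun h =>
      (IsLocalRing.maximalIdeal.isMaximal (↥T)).ne_top (top_le_iff.mp (h ▸ hJ'le))
    have hJ'0 : J' ≠ ⊥ := by
      obtain ⟨x, hxJ, hx0⟩ := Submodule.exists_mem_ne_zero_of_ne_bot hJ0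
      intro hbot
      have hmem : algebraMap D T x ∈ J' := Ideal.mem_map_of_mem _ hxJ
      rw [hbot, Ideal.mem_bot] at hmem
      have : ((algebraMap D T x : T) : FractionRing D) = 0 := by rw [hmem]; rfl
      rw [halg] at this
      exact hx0 (IsFractionRing.to_map_eq_zero_iff.mp this)
    have hJ'fg : J'.FG := Ideal.FG.map hfg _
    obtain ⟨a, ha⟩ := (IsBezout.isPrincipal_of_FG J' hJ'fg).principal
    have ha0 : a ≠ 0 := by
      rintro rfl
      rw [Ideal.submodule_span_eq, Ideal.span_singleton_eq_bot.mpr rfl] at ha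
      exact hJ'0 ha
    have hne : (J' : FractionalIdeal T⁰ (FractionRing T)) ≠ 0 :=
      FractionalIdeal.coeIdeal_ne_zero.mpr hJ'0
    have hfg'' : ((J' : FractionalIdeal T⁰ (FractionRing T)) :
        Submodule T (FractionRing T)).FG :=
      (FractionalIdeal.coeIdeal_fg T⁰ (IsFractionRing.injective T (FractionRing T)) J').mpr hJ'fg
    have hTL' : tClos T (J' : FractionalIdeal T⁰ (FractionRing T)) = _ := hTL
    rw [tClos_eq_v hne hfg''] at hTL'
    have hJ'eq : (J' : FractionalIdeal T⁰ (FractionRing T))⁻¹⁻¹ = 1 :=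
      FractionalIdeal.coeToSubmodule_injective hTL'
    have hcoe : (J' : FractionalIdeal T⁰ (FractionRing T)) =
        spanSingleton T⁰ (algebraMap T (FractionRing T) a) := by
      rw [ha, Ideal.submodule_span_eq, FractionalIdeal.coeIdeal_span_singleton]
    rw [hcoe, FractionalIdeal.spanSingleton_inv, FractionalIdeal.spanSingleton_inv,
      inv_inv, ← hcoe] at hJ'eq
    exact hJ'top (by rw [← Ideal.one_eq_top]; exact FractionalIdeal.coeIdeal_eq_one.mp hJ'eq)
  tfae_finish

end Main
end

section
/- Let D be an integral domain containing a nonzero nonunit comparable element, and let C be the set of all nonzero comparable elements of D. Then: (1) P := ⋂{cD : c ∈ C} is a prime ideal of D and D \ P = C (in particular, C is a saturated multiplicative subset of D); (2) the quotient D/P is a valuation domain; (3) P = PD_P, i.e., P coincides with its extension to the localization D_P; (4) D is local and P is comparable under inclusion with every ideal of D. -/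
open scoped nonZeroDivisors

/-- A nonzero element `c` of a domain `D` is comparable if for every `x ∈ D`,
either `cD ⊆ xD` or `xD ⊆ cD`. -/
def IsComparable {D : Type*} [CommRing D] (c : D) : Prop :=
  c ≠ 0 ∧ ∀ x : D, Ideal.span {c} ≤ Ideal.span {x} ∨ Ideal.span {x} ≤ Ideal.span {c}

lemma isComparable_iff {D : Type*} [CommRing D] (c : D) :
    IsComparable c ↔ c ≠ 0 ∧ ∀ x : D, x ∣ c ∨ c ∣ x := by
  simp [IsComparable, Ideal.span_singleton_le_span_singleton, Ideal.mem_span_singleton]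

lemma IsComparable.mul {D : Type*} [CommRing D] [IsDomain D] {a b : D}
    (ha : IsComparable a) (hb : IsComparable b) : IsComparable (a * b) := by
  rw [isComparable_iff] at *
  obtain ⟨ha0, ha⟩ := ha
  obtain ⟨hb0, hb⟩ := hb
  refine ⟨mul_ne_zero ha0 hb0, fun x => ?_⟩
  rcases ha x with h | ⟨y, rfl⟩
  · exact Or.inl (h.mul_right b)
  · rcases hb y with h | h
    · exact Or.inl (mul_dvd_mul_left a h)
    · exact Or.inr (mul_dvd_mul_left a h)

lemma IsComparable.of_mul_left {D : Type*} [CommRing D] [IsDomain D] {a b : D}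
    (h : IsComparable (a * b)) : IsComparable a := by
  rw [isComparable_iff] at *
  obtain ⟨h0, h⟩ := h
  have ha0 : a ≠ 0 := left_ne_zero_of_mul h0
  have hb0 : b ≠ 0 := right_ne_zero_of_mul h0
  refine ⟨ha0, fun y => ?_⟩
  rcases h (b * y) with ⟨t, ht⟩ | ⟨t, ht⟩
  · exact Or.inl ⟨t, mul_left_cancel₀ hb0 (by linear_combination ht)⟩
  · exact Or.inr ⟨t, mul_left_cancel₀ hb0 (by linear_combination ht)⟩

/-- Let `D` be an integral domain containing a nonzero nonunit comparable element and
let `P := ⋂ {cD : c comparable}`. Then: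
(1) `P` is a prime ideal of `D` and `D \ P` is exactly the set of (nonzero) comparable
elements of `D`;
(2) `D/P` is a valuation domain;
(3) `P = PD_P` (every element `p/s` of `PD_P`, `p ∈ P`, `s ∉ P`, already lies in `P`);
(4) `D` is local and `P` is comparable under inclusion with every ideal of `D`. -/
theorem comparable_element_structure (D : Type*) [CommRing D] [IsDomain D]
    (h : ∃ c : D, IsComparable c ∧ ¬ IsUnit c)
    (P : Ideal D) (hP : P = ⨅ c ∈ {c : D | IsComparable c}, Ideal.span {c}) :
    ∃ hp : P.IsPrime,
      (∀ x : D, x ∉ P ↔ IsComparable x) ∧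
      (letI := hp; ValuationRing (D ⧸ P)) ∧
      (∀ p ∈ P, ∀ s ∉ P, ∃ q ∈ P, p = s * q) ∧
      IsLocalRing D ∧
      (∀ I : Ideal D, I ≤ P ∨ P ≤ I) := by
  obtain ⟨c₀, hc₀, hc₀u⟩ := h
  have memP : ∀ x : D, x ∈ P ↔ ∀ c : D, IsComparable c → c ∣ x := by
    intro x
    simp [hP, Ideal.mem_iInf, Ideal.mem_span_singleton, Set.mem_setOf_eq]
  have hPne : (1 : D) ∉ P := fun h1 =>
    hc₀u (isUnit_of_dvd_one ((memP 1).1 h1 c₀ hc₀))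
  have notP_of_comp : ∀ x : D, IsComparable x → x ∉ P := by
    intro x hx hxP
    by_cases hu : IsUnit x
    · obtain ⟨u, rfl⟩ := hu
      exact hPne (by simpa using P.mul_mem_left (↑u⁻¹) hxP)
    · obtain ⟨t, ht⟩ := (memP x).1 hxP (x * x) (hx.mul hx)
      have hx0 := ((isComparable_iff x).1 hx).1
      exact hu (IsUnit.of_mul_eq_one (a := x) t
        (mul_left_cancel₀ hx0 (by linear_combination -ht)))
  have comp_of_notP : ∀ x : D, x ∉ P → IsComparable x := by
    intro x hx
    rw [memP] at hx
    push_neg at hx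
    obtain ⟨c, hc, hcx⟩ := hx
    have hxc : x ∣ c := by
      rcases ((isComparable_iff c).1 hc).2 x with h' | h'
      · exact h'
      · exact absurd h' hcx
    obtain ⟨u, rfl⟩ := hxc
    exact hc.of_mul_left
  have hp : P.IsPrime := by
    refine ⟨(Ideal.ne_top_iff_one P).2 hPne, ?_⟩
    intro a b hab
    by_contra hcon
    push_neg at hcon
    exact notP_of_comp _
      ((comp_of_notP a hcon.1).mul (comp_of_notP b hcon.2)) hab
  haveI := hp
  have hval : ValuationRing (D ⧸ P) := by
    refine @ValuationRing.mk _ _ _ ⟨fun a b => ?_⟩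
    obtain ⟨x, rfl⟩ := Ideal.Quotient.mk_surjective a
    obtain ⟨y, rfl⟩ := Ideal.Quotient.mk_surjective b
    by_cases hx : x ∈ P
    · exact ⟨0, Or.inr (by rw [mul_zero]; exact (Ideal.Quotient.eq_zero_iff_mem.2 hx).symm)⟩
    · by_cases hy : y ∈ P
      · exact ⟨0, Or.inl (by rw [mul_zero]; exact (Ideal.Quotient.eq_zero_iff_mem.2 hy).symm)⟩
      · rcases ((isComparable_iff x).1 (comp_of_notP x hx)).2 y with ⟨t, ht⟩ | ⟨t, ht⟩
        · exact ⟨Ideal.Quotient.mk P t, Or.inr (by rw [← map_mul, ← ht])⟩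
        · exact ⟨Ideal.Quotient.mk P t, Or.inl (by rw [← map_mul, ← ht])⟩
  have h3 : ∀ p ∈ P, ∀ s ∉ P, ∃ q ∈ P, p = s * q := by
    intro p hp' s hs
    have hsc := comp_of_notP s hs
    rcases ((isComparable_iff s).1 hsc).2 p with ⟨t, ht⟩ | ⟨q, hq⟩
    · exact absurd (ht ▸ P.mul_mem_right t hp') hs
    · by_cases hqP : q ∈ P
      · exact ⟨q, hqP, hq⟩
      · have : IsComparable p := by
          rw [hq]; exact hsc.mul (comp_of_notP q hqP)
        exact absurd hp' (notP_of_comp p this)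
  have key : ∀ a b : D, ¬IsUnit a → ¬IsUnit b → IsComparable a → ¬IsUnit (a + b) := by
    intro a b ha hb hac hu
    rcases ((isComparable_iff a).1 hac).2 b with ⟨t, ht⟩ | ⟨t, ht⟩
    · exact hb (isUnit_of_dvd_unit ⟨t + 1, by rw [ht]; ring⟩ hu)
    · exact ha (isUnit_of_dvd_unit ⟨1 + t, by rw [ht]; ring⟩ hu)
  have hlocal : IsLocalRing D := by
    apply IsLocalRing.of_nonunits_add
    intro a b ha hb
    rw [mem_nonunits_iff] at *
    by_cases haP : a ∈ P
    · by_cases hbP : b ∈ P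
      · intro hu
        exact hPne ((Ideal.eq_top_of_isUnit_mem P (P.add_mem haP hbP) hu) ▸
          Submodule.mem_top)
      · rw [add_comm]
        exact key b a hb ha (comp_of_notP b hbP)
    · exact key a b ha hb (comp_of_notP a haP)
  have h4 : ∀ I : Ideal D, I ≤ P ∨ P ≤ I := by
    intro I
    by_cases hI : I ≤ P
    · exact Or.inl hI
    · right
      rw [SetLike.not_le_iff_exists] at hI
      obtain ⟨a, haI, haP⟩ := hI
      intro p hp'
      rcases ((isComparable_iff a).1 (comp_of_notP a haP)).2 p with ⟨t, ht⟩ | ⟨t, ht⟩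
      · exact absurd (ht ▸ P.mul_mem_right t hp') haP
      · exact ht ▸ I.mul_mem_right t haI
  exact ⟨hp, fun x => ⟨comp_of_notP x, notP_of_comp x⟩, hval, h3, hlocal, h4⟩
end
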